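/- Let n ≥ 1, let F be an n×n real matrix, and let P be an n×n real symmetric positive definite matrix satisfying Fᵀ·P·F − P = −I_n. Let λ_min(P) and λ_max(P) denote the smallest and largest eigenvalues of P, set λ = 1 − 1/(2·λ_max(P)) and β = ‖P‖ + 2·‖P·F‖², where ‖·‖ is the operator norm induced by the Euclidean norm on ℝⁿ. Let x, G : ℕ → ℝⁿ satisfy x(t+1) = F·x(t) + G(t) for all t, and suppose there is α₂ ≥ 0 with limsup_{t→∞} ‖G(t)‖ ≤ α₂. Then limsup_{t→∞} ‖x(t)‖² ≤ β·α₂²/(λ_min(P)·(1 − λ)). -/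

import Mathlib

open Matrix

open Filter

set_option maxHeartbeats 2000000 in
open Topology RealInnerProductSpace in
/-- Part 2) of Lemma 3: for `x(t+1) = F x(t) + G(t)` with `FᵀPF − P = −I`,
an asymptotic bound `α₂` on the inputs gives
`limsup ‖x(t)‖² ≤ β α₂²/(λ_min(P)(1 − λ))`. -/
theorem limsup_norm_sq_bound_of_limsup
    (n : ℕ) (hn : 1 ≤ n)
    (F P : Matrix (Fin n) (Fin n) ℝ)
    (hPsymm : P.IsSymm) (hPpd : P.PosDef)
    (hLyap : Fᵀ * P * F - P = -(1 : Matrix (Fin n) (Fin n) ℝ))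
    (lamMin lamMax lam beta : ℝ)
    (hlamMin : IsLeast (spectrum ℝ P) lamMin)
    (hlamMax : IsGreatest (spectrum ℝ P) lamMax)
    (hlam : lam = 1 - 1 / (2 * lamMax))
    (hbeta : beta = ‖Matrix.toEuclideanCLM (𝕜 := ℝ) P‖ +
      2 * ‖Matrix.toEuclideanCLM (𝕜 := ℝ) (P * F)‖ ^ 2)
    (x G : ℕ → EuclideanSpace ℝ (Fin n))
    (hx : ∀ t, x (t + 1) = Matrix.toEuclideanCLM (𝕜 := ℝ) F (x t) + G t)
    (α₂ : ℝ) (hα₂ : 0 ≤ α₂) (hG : limsup (fun t => ‖G t‖) atTop ≤ α₂) :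
    limsup (fun t => ‖x t‖ ^ 2) atTop ≤ beta * α₂ ^ 2 / (lamMin * (1 - lam)) := by
  classical
  set A := Matrix.toEuclideanCLM (𝕜 := ℝ) F with hA
  set T := Matrix.toEuclideanCLM (𝕜 := ℝ) P with hTdef
  set M := Matrix.toEuclideanCLM (𝕜 := ℝ) (P * F) with hMdef
  have hPH : P.IsHermitian := hPpd.1
  -- self-adjointness of T
  have hTadj : ContinuousLinearMap.adjoint T = T := by
    rw [hTdef, ← ContinuousLinearMap.star_eq_adjoint, ← map_star]
    exact congrArg _ hPH
  have hTself : ∀ u w : EuclideanSpace ℝ (Fin n), ⟪T u, w⟫ = ⟪u, T w⟫ := by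
    intro u w
    conv_lhs => rw [← hTadj]
    rw [ContinuousLinearMap.adjoint_inner_left]
  -- adjoint of A
  have hAadj : ContinuousLinearMap.adjoint A = Matrix.toEuclideanCLM (𝕜 := ℝ) Fᵀ := by
    rw [hA, ← ContinuousLinearMap.star_eq_adjoint, ← map_star]
    refine congrArg _ ?_
    ext i j
    simp [Matrix.star_eq_conjTranspose, Matrix.conjTranspose_apply]
  -- composition facts
  have hTA : ∀ y, T (A y) = M y := by
    intro y
    rw [hMdef, _root_.map_mul]; rfl
  -- eigenvalue bounds
  have heig_mem : ∀ i, hPH.eigenvalues i ∈ spectrum ℝ P :=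
    fun i => hPH.eigenvalues_mem_spectrum_real i
  have heig_lb : ∀ i, lamMin ≤ hPH.eigenvalues i := fun i => hlamMin.2 (heig_mem i)
  have heig_ub : ∀ i, hPH.eigenvalues i ≤ lamMax := fun i => hlamMax.2 (heig_mem i)
  have heigpos : ∀ i, 0 < hPH.eigenvalues i := hPpd.eigenvalues_pos
  have hlamMin_pos : 0 < lamMin := by
    have h1 := hlamMin.1
    rw [hPH.spectrum_real_eq_range_eigenvalues] at h1
    obtain ⟨i, hi⟩ := h1
    exact hi ▸ heigpos i
  -- quadratic form bounds
  have quad : ∀ y : EuclideanSpace ℝ (Fin n),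
      lamMin * ‖y‖^2 ≤ ⟪y, T y⟫ ∧ ⟪y, T y⟫ ≤ lamMax * ‖y‖^2 := by
    intro y
    set b := hPH.eigenvectorBasis with hb
    have hTb : ∀ i, T (b i) = hPH.eigenvalues i • b i := by
      intro i
      ext j
      exact congrFun (hPH.mulVec_eigenvectorBasis i) j
    have hexp : ⟪y, T y⟫ = ∑ i, hPH.eigenvalues i * (⟪b i, y⟫)^2 := by
      rw [← b.sum_inner_mul_inner y (T y)]
      refine Finset.sum_congr rfl fun i _ => ?_
      have h3 : ⟪b i, T y⟫ = hPH.eigenvalues i * ⟪b i, y⟫ := by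
        rw [← hTself, hTb i, real_inner_smul_left]
      rw [h3, real_inner_comm y (b i)]; ring
    have hnorm : ‖y‖^2 = ∑ i, (⟪b i, y⟫)^2 := by
      have h := b.sum_inner_mul_inner y y
      rw [real_inner_self_eq_norm_sq] at h
      rw [← h]
      refine Finset.sum_congr rfl fun i _ => ?_
      rw [real_inner_comm y (b i)]; ring
    constructor
    · rw [hexp, hnorm, Finset.mul_sum]
      exact Finset.sum_le_sum fun i _ =>
        mul_le_mul_of_nonneg_right (heig_lb i) (sq_nonneg _)
    · rw [hexp, hnorm, Finset.mul_sum]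
      exact Finset.sum_le_sum fun i _ =>
        mul_le_mul_of_nonneg_right (heig_ub i) (sq_nonneg _)
  set v : ℕ → ℝ := fun t => ⟪x t, T (x t)⟫ with hv
  have hv_ge : ∀ t, lamMin * ‖x t‖^2 ≤ v t := fun t => (quad (x t)).1
  have hv_le : ∀ t, v t ≤ lamMax * ‖x t‖^2 := fun t => (quad (x t)).2
  -- Lyapunov identity
  have hFPF : Fᵀ * (P * F) = P - 1 := by
    rw [← Matrix.mul_assoc, sub_eq_iff_eq_add.mp hLyap, neg_add_eq_sub]
  have hMF : ∀ y : EuclideanSpace ℝ (Fin n), ⟪A y, T (A y)⟫ = ⟪y, T y⟫ - ‖y‖^2 := by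
    intro y
    rw [hTA, ← ContinuousLinearMap.adjoint_inner_right, hAadj]
    have h1 : (Matrix.toEuclideanCLM (𝕜 := ℝ) Fᵀ) (M y)
        = (Matrix.toEuclideanCLM (𝕜 := ℝ) (Fᵀ * (P * F))) y := by
      rw [_root_.map_mul]; rfl
    rw [h1, hFPF, map_sub, _root_.map_one]
    rw [ContinuousLinearMap.sub_apply, inner_sub_right, ContinuousLinearMap.one_apply,
      real_inner_self_eq_norm_sq]
  -- beta nonneg
  have hbeta0 : 0 ≤ beta := by
    rw [hbeta]; positivity
  -- lamMax ≥ 1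
  have hlamMax1 : 1 ≤ lamMax := by
    set y : EuclideanSpace ℝ (Fin n) := EuclideanSpace.single (⟨0, hn⟩ : Fin n) (1:ℝ) with hy
    have hy1 : ‖y‖ = 1 := by simp [hy, EuclideanSpace.norm_single]
    have h1 := hMF y
    have h2 := (quad (A y)).1
    have h3 := (quad y).2
    have h4 : 0 ≤ lamMin * ‖A y‖^2 := mul_nonneg hlamMin_pos.le (sq_nonneg _)
    rw [hy1] at h1 h3
    nlinarith
  have hlamMax0 : 0 < lamMax := by linarith
  have h1lam : 0 < 1 - lam := by
    rw [hlam]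
    have : 0 < 1 / (2 * lamMax) := by positivity
    linarith
  have hlam0 : 0 ≤ lam := by
    rw [hlam]
    have h5 : 1 / (2 * lamMax) ≤ 1 / 2 :=
      one_div_le_one_div_of_le (by norm_num) (by linarith)
    linarith
  have hlam1 : lam < 1 := by linarith
  have heqlam : (1 - lam) * lamMax = 1 / 2 := by
    rw [hlam]
    field_simp
    ring
  -- key recursion inequality
  have key : ∀ t, v (t + 1) ≤ lam * v t + beta * ‖G t‖^2 := by
    intro t
    have expand : v (t + 1) = ⟪A (x t), T (A (x t))⟫ + 2 * ⟪M (x t), G t⟫ + ⟪G t, T (G t)⟫ := by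
      show ⟪x (t+1), T (x (t+1))⟫ = _
      rw [hx t, map_add, inner_add_left, inner_add_right, inner_add_right]
      have c1 : ⟪A (x t), T (G t)⟫ = ⟪M (x t), G t⟫ := by
        rw [← hTself, hTA]
      have c2 : ⟪G t, T (A (x t))⟫ = ⟪M (x t), G t⟫ := by
        rw [real_inner_comm, hTself, ← hTself, hTA]
      rw [c1, c2]; ring
    have b1 : ⟪M (x t), G t⟫ ≤ ‖M‖ * ‖x t‖ * ‖G t‖ := by
      calc ⟪M (x t), G t⟫ ≤ ‖M (x t)‖ * ‖G t‖ := real_inner_le_norm _ _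
        _ ≤ ‖M‖ * ‖x t‖ * ‖G t‖ :=
          mul_le_mul_of_nonneg_right (M.le_opNorm _) (norm_nonneg _)
    have b2 : ⟪G t, T (G t)⟫ ≤ ‖T‖ * ‖G t‖^2 := by
      calc ⟪G t, T (G t)⟫ ≤ ‖G t‖ * ‖T (G t)‖ := real_inner_le_norm _ _
        _ ≤ ‖G t‖ * (‖T‖ * ‖G t‖) :=
          mul_le_mul_of_nonneg_left (T.le_opNorm _) (norm_nonneg _)
        _ = ‖T‖ * ‖G t‖^2 := by ring
    have hMle := hMF (x t)
    have h5 : (1 - lam) * v t ≤ (1/2) * ‖x t‖^2 := by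
      calc (1 - lam) * v t ≤ (1 - lam) * (lamMax * ‖x t‖^2) :=
            mul_le_mul_of_nonneg_left (hv_le t) h1lam.le
        _ = ((1 - lam) * lamMax) * ‖x t‖^2 := by ring
        _ = (1/2) * ‖x t‖^2 := by rw [heqlam]
    have hyoung : 2 * (‖M‖ * ‖x t‖ * ‖G t‖) ≤ (1/2) * ‖x t‖^2 + 2 * ‖M‖^2 * ‖G t‖^2 := by
      nlinarith [sq_nonneg (‖x t‖ - 2 * ‖M‖ * ‖G t‖)]
    have hvt : v t = ⟪x t, T (x t)⟫ := rfl
    rw [hvt] at h5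
    rw [expand, hMle, hbeta]
    linarith [b1, b2, h5, hyoung]
  -- nonnegativity of RHS
  have hRHS0 : 0 ≤ beta * α₂ ^ 2 / (lamMin * (1 - lam)) := by
    apply div_nonneg (mul_nonneg hbeta0 (sq_nonneg _))
    exact (mul_pos hlamMin_pos h1lam).le
  by_cases hb : IsBoundedUnder (· ≤ ·) atTop (fun t => ‖x t‖^2)
  swap
  · rw [limsup_eq]
    have hset : {a : ℝ | ∀ᶠ t in atTop, ‖x t‖^2 ≤ a} = ∅ := by
      ext a
      simp only [Set.mem_setOf_eq, Set.mem_empty_iff_false, iff_false]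
      exact fun h' => hb ⟨a, h'⟩
    rw [hset, Real.sInf_empty]; exact hRHS0
  · -- x bounded, hence G bounded
    have hgb : IsBoundedUnder (· ≤ ·) atTop (fun t => ‖G t‖) := by
      obtain ⟨C, hC⟩ := hb
      rw [eventually_map, eventually_atTop] at hC
      obtain ⟨N, hN⟩ := hC
      refine ⟨max C 1 + ‖A‖ * max C 1, ?_⟩
      rw [eventually_map, eventually_atTop]
      refine ⟨N, fun t ht => ?_⟩
      have hx1 : ‖x t‖ ≤ max C 1 := by
        have h1 := hN t ht
        have h2 : (0:ℝ) ≤ ‖x t‖ := norm_nonneg _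
        rcases le_or_gt (‖x t‖) 1 with h | h
        · exact le_trans h (le_max_right _ _)
        · have : ‖x t‖ ≤ ‖x t‖^2 := by nlinarith
          exact le_trans (le_trans this h1) (le_max_left _ _)
      have hx2 : ‖x (t+1)‖ ≤ max C 1 := by
        have h1 := hN (t+1) (by omega)
        have h2 : (0:ℝ) ≤ ‖x (t+1)‖ := norm_nonneg _
        rcases le_or_gt (‖x (t+1)‖) 1 with h | h
        · exact le_trans h (le_max_right _ _)
        · have : ‖x (t+1)‖ ≤ ‖x (t+1)‖^2 := by nlinarith
          exact le_trans (le_trans this h1) (le_max_left _ _)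
      have hGt : G t = x (t+1) - A (x t) := by
        rw [hx t]; abel
      calc ‖G t‖ = ‖x (t+1) - A (x t)‖ := by rw [hGt]
        _ ≤ ‖x (t+1)‖ + ‖A (x t)‖ := norm_sub_le _ _
        _ ≤ max C 1 + ‖A‖ * max C 1 := by
            refine add_le_add hx2 ?_
            calc ‖A (x t)‖ ≤ ‖A‖ * ‖x t‖ := A.le_opNorm _
              _ ≤ ‖A‖ * max C 1 := mul_le_mul_of_nonneg_left hx1 (norm_nonneg _)
    have hcob : IsCoboundedUnder (· ≤ ·) atTop (fun t => ‖x t‖^2) :=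
      isCoboundedUnder_le_of_le atTop (fun t => sq_nonneg ‖x t‖)
    have hmain : ∀ δ : ℝ, 0 < δ →
        limsup (fun t => ‖x t‖^2) atTop ≤ (beta * (α₂ + δ)^2 / (1 - lam) + δ) / lamMin := by
      intro δ hδ
      have hge : ∀ᶠ t in atTop, ‖G t‖ ≤ α₂ + δ := by
        have h1 : limsup (fun t => ‖G t‖) atTop < α₂ + δ := lt_of_le_of_lt hG (by linarith)
        exact (eventually_lt_of_limsup_lt h1 hgb).mono fun t ht => ht.le
      obtain ⟨t₀, ht₀⟩ := eventually_atTop.mp hge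
      set c := beta * (α₂ + δ)^2 / (1 - lam) with hc
      have hc0 : 0 ≤ c := div_nonneg (mul_nonneg hbeta0 (sq_nonneg _)) h1lam.le
      have hrec : ∀ k, v (t₀ + k) ≤ lam^k * v t₀ + c := by
        intro k
        induction k with
        | zero => simp; linarith
        | succ k ih =>
          have h1 : v (t₀ + k + 1) ≤ lam * v (t₀ + k) + beta * ‖G (t₀ + k)‖^2 := key _
          have h2 : ‖G (t₀ + k)‖ ≤ α₂ + δ := ht₀ _ (Nat.le_add_right _ _)
          have h3 : beta * ‖G (t₀ + k)‖^2 ≤ beta * (α₂ + δ)^2 := by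
            refine mul_le_mul_of_nonneg_left ?_ hbeta0
            nlinarith [norm_nonneg (G (t₀ + k))]
          have h4 : lam * v (t₀ + k) ≤ lam * (lam^k * v t₀ + c) :=
            mul_le_mul_of_nonneg_left ih hlam0
          have h5 : lam * c + beta * (α₂ + δ)^2 = c := by
            rw [hc]
            field_simp
            ring
          have h6 : t₀ + (k + 1) = t₀ + k + 1 := by omega
          rw [h6]
          calc v (t₀ + k + 1) ≤ lam * v (t₀ + k) + beta * ‖G (t₀ + k)‖^2 := h1
            _ ≤ lam * (lam^k * v t₀ + c) + beta * (α₂ + δ)^2 := by linarith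
            _ = lam^(k+1) * v t₀ + (lam * c + beta * (α₂ + δ)^2) := by ring
            _ = lam^(k+1) * v t₀ + c := by rw [h5]
      have htend : Tendsto (fun k : ℕ => lam^k * v t₀ + c) atTop (𝓝 c) := by
        have h := tendsto_pow_atTop_nhds_zero_of_lt_one hlam0 hlam1
        simpa using (h.mul_const (v t₀)).add_const c
      have hev : ∀ᶠ k in atTop, lam^k * v t₀ + c ≤ c + δ := by
        have := htend.eventually_lt_const (show c < c + δ by linarith)
        exact this.mono fun k hk => hk.le
      obtain ⟨K, hK⟩ := eventually_atTop.mp hev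
      have hvev : ∀ᶠ t in atTop, ‖x t‖^2 ≤ (c + δ) / lamMin := by
        rw [eventually_atTop]
        refine ⟨t₀ + K, fun t ht => ?_⟩
        have h6 : v t ≤ c + δ := by
          have h7 : t₀ + (t - t₀) = t := by omega
          calc v t = v (t₀ + (t - t₀)) := by rw [h7]
            _ ≤ lam^(t - t₀) * v t₀ + c := hrec _
            _ ≤ c + δ := hK _ (by omega)
        rw [le_div_iff₀ hlamMin_pos]
        have := hv_ge t
        nlinarith
      exact limsup_le_of_le hcob hvev
    have hf : Tendsto (fun δ : ℝ => (beta * (α₂ + δ)^2 / (1 - lam) + δ) / lamMin)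
        (𝓝[>] (0:ℝ)) (𝓝 ((beta * (α₂ + 0)^2 / (1 - lam) + 0) / lamMin)) := by
      refine Tendsto.mono_left ?_ nhdsWithin_le_nhds
      have hcont : Continuous (fun δ : ℝ => (beta * (α₂ + δ)^2 / (1 - lam) + δ) / lamMin) := by
        apply Continuous.div_const
        exact ((continuous_const.mul ((continuous_const.add continuous_id).pow 2)).div_const
          _).add continuous_id
      exact hcont.tendsto 0
    have hle := ge_of_tendsto hf
      (eventually_nhdsWithin_of_forall fun δ hδ => hmain δ hδ)
    calc limsup (fun t => ‖x t‖^2) atTop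
        ≤ (beta * (α₂ + 0)^2 / (1 - lam) + 0) / lamMin := hle
      _ = beta * α₂ ^ 2 / (lamMin * (1 - lam)) := by
          rw [add_zero, add_zero, div_div]
          ring
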